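/- arXiv:1809.03136 — 3 statements merged into one kernel-verified Lean document; each statement's English description precedes it below -/
import Mathlib

section
/- Let Ω ⊆ ℝ³ be a bounded open set and let w : ℝ³ → ℝ³ be a smooth vector field whose helicity density h = w · (curl w) is nonzero at every point of Ω. Suppose that for every point x ∈ Ω there exist an open neighborhood U ⊆ Ω of x and smooth functions ℓ, ψ, θ : U → ℝ such that on U: w = cos θ ∇ψ + sin θ ∇ℓ, cos θ · sin θ · (|∇ψ|² − |∇ℓ|²) = (∇ℓ · ∇ψ)(cos²θ − sin²θ), and sin θ (∇ℓ · ∇θ) + cos θ (∇ψ · ∇θ) = 0. Then w × (curl w) = 0 on Ω, i.e. w is a Beltrami field in Ω. -/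
noncomputable section

abbrev R3 : Type := Fin 3 → ℝ

/-- Euclidean dot product on ℝ³. -/
def dot3 (u v : R3) : ℝ := u 0 * v 0 + u 1 * v 1 + u 2 * v 2

/-- Cross product on ℝ³. -/
def cross3 (u v : R3) : R3 :=
  ![u 1 * v 2 - u 2 * v 1, u 2 * v 0 - u 0 * v 2, u 0 * v 1 - u 1 * v 0]

/-- Euclidean norm on ℝ³. -/
def norm3 (u : R3) : ℝ := Real.sqrt (dot3 u u)

/-- Partial derivative of a scalar field in the `i`-th coordinate direction. -/
def pd (i : Fin 3) (f : R3 → ℝ) (x : R3) : ℝ := fderiv ℝ f x (Pi.single i 1)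

/-- Gradient of a scalar field. -/
def grad3 (f : R3 → ℝ) (x : R3) : R3 := fun i => pd i f x

/-- Curl of a vector field. -/
def curl3 (w : R3 → R3) (x : R3) : R3 :=
  ![pd 1 (fun y => w y 2) x - pd 2 (fun y => w y 1) x,
    pd 2 (fun y => w y 0) x - pd 0 (fun y => w y 2) x,
    pd 0 (fun y => w y 1) x - pd 1 (fun y => w y 0) x]

/-- Divergence of a vector field. -/
def div3 (w : R3 → R3) (x : R3) : ℝ :=
  pd 0 (fun y => w y 0) x + pd 1 (fun y => w y 1) x + pd 2 (fun y => w y 2) x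

/-- Laplacian of a scalar field. -/
def lap3 (f : R3 → ℝ) (x : R3) : ℝ := div3 (grad3 f) x


lemma pd_expand {ℓ ψ θ : R3 → ℝ} {x : R3}
    (hℓ : ContDiffAt ℝ (⊤:ℕ∞) ℓ x) (hψ : ContDiffAt ℝ (⊤:ℕ∞) ψ x)
    (hθ : ContDiffAt ℝ (⊤:ℕ∞) θ x) (i j : Fin 3) :
    pd i (fun y => Real.cos (θ y) * pd j ψ y + Real.sin (θ y) * pd j ℓ y) x =
      (-Real.sin (θ x) * pd i θ x) * pd j ψ x
      + Real.cos (θ x) * fderiv ℝ (fderiv ℝ ψ) x (Pi.single i 1) (Pi.single j 1)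
      + (Real.cos (θ x) * pd i θ x) * pd j ℓ x
      + Real.sin (θ x) * fderiv ℝ (fderiv ℝ ℓ) x (Pi.single i 1) (Pi.single j 1) := by
  have hθd : DifferentiableAt ℝ θ x := hθ.differentiableAt (by simp)
  have hcos : HasFDerivAt (fun y => Real.cos (θ y)) ((-Real.sin (θ x)) • fderiv ℝ θ x) x :=
    (Real.hasDerivAt_cos (θ x)).comp_hasFDerivAt x hθd.hasFDerivAt
  have hsin : HasFDerivAt (fun y => Real.sin (θ y)) ((Real.cos (θ x)) • fderiv ℝ θ x) x :=
    (Real.hasDerivAt_sin (θ x)).comp_hasFDerivAt x hθd.hasFDerivAt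
  have hψ2 : DifferentiableAt ℝ (fderiv ℝ ψ) x :=
    (hψ.fderiv_right (m := (⊤:ℕ∞)) (by exact_mod_cast le_top)).differentiableAt (by simp)
  have hℓ2 : DifferentiableAt ℝ (fderiv ℝ ℓ) x :=
    (hℓ.fderiv_right (m := (⊤:ℕ∞)) (by exact_mod_cast le_top)).differentiableAt (by simp)
  have hψ1 : HasFDerivAt (fun y => pd j ψ y)
      ((ContinuousLinearMap.apply ℝ ℝ (Pi.single j (1:ℝ))).comp (fderiv ℝ (fderiv ℝ ψ) x)) x := by
    simpa [Function.comp_def, pd] using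
      ((ContinuousLinearMap.apply ℝ ℝ (Pi.single j (1:ℝ))).hasFDerivAt).comp x hψ2.hasFDerivAt
  have hℓ1 : HasFDerivAt (fun y => pd j ℓ y)
      ((ContinuousLinearMap.apply ℝ ℝ (Pi.single j (1:ℝ))).comp (fderiv ℝ (fderiv ℝ ℓ) x)) x := by
    simpa [Function.comp_def, pd] using
      ((ContinuousLinearMap.apply ℝ ℝ (Pi.single j (1:ℝ))).hasFDerivAt).comp x hℓ2.hasFDerivAt
  have htot := (hcos.mul hψ1).add (hsin.mul hℓ1)
  rw [pd, show (fun y => Real.cos (θ y) * pd j ψ y + Real.sin (θ y) * pd j ℓ y) = (((fun y => Real.cos (θ y)) * fun y => pd j ψ y) + (fun y => Real.sin (θ y)) * fun y => pd j ℓ y) from rfl, htot.fderiv]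
  simp [pd, ContinuousLinearMap.add_apply, ContinuousLinearMap.smul_apply,
    ContinuousLinearMap.comp_apply, ContinuousLinearMap.apply_apply, smul_eq_mul]
  ring

/-- Local representation theorem for Beltrami fields (sufficiency direction). -/
theorem beltrami_of_local_representation
    (Ω : Set R3) (hΩopen : IsOpen Ω) (hΩbdd : Bornology.IsBounded Ω)
    (w : R3 → R3) (hw : ContDiff ℝ (⊤ : ℕ∞) w)
    (hhel : ∀ x ∈ Ω, dot3 (w x) (curl3 w x) ≠ 0)
    (hloc : ∀ x ∈ Ω, ∃ U : Set R3, IsOpen U ∧ x ∈ U ∧ U ⊆ Ω ∧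
      ∃ ℓ ψ θ : R3 → ℝ,
        ContDiffOn ℝ (⊤ : ℕ∞) ℓ U ∧ ContDiffOn ℝ (⊤ : ℕ∞) ψ U ∧
        ContDiffOn ℝ (⊤ : ℕ∞) θ U ∧
        ∀ y ∈ U,
          w y = Real.cos (θ y) • grad3 ψ y + Real.sin (θ y) • grad3 ℓ y ∧
          Real.cos (θ y) * Real.sin (θ y) *
              (dot3 (grad3 ψ y) (grad3 ψ y) - dot3 (grad3 ℓ y) (grad3 ℓ y)) =
            dot3 (grad3 ℓ y) (grad3 ψ y) * (Real.cos (θ y) ^ 2 - Real.sin (θ y) ^ 2) ∧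
          Real.sin (θ y) * dot3 (grad3 ℓ y) (grad3 θ y) +
            Real.cos (θ y) * dot3 (grad3 ψ y) (grad3 θ y) = 0) :
    ∀ x ∈ Ω, cross3 (w x) (curl3 w x) = 0 := by
  intro x hx
  obtain ⟨U, hUo, hxU, hUΩ, ℓ, ψ, θ, hℓU, hψU, hθU, hrep⟩ := hloc x hx
  have hmem : U ∈ nhds x := hUo.mem_nhds hxU
  have hℓx : ContDiffAt ℝ (⊤:ℕ∞) ℓ x := hℓU.contDiffAt hmem
  have hψx : ContDiffAt ℝ (⊤:ℕ∞) ψ x := hψU.contDiffAt hmem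
  have hθx : ContDiffAt ℝ (⊤:ℕ∞) θ x := hθU.contDiffAt hmem
  have hpdw : ∀ i j : Fin 3, pd i (fun y => w y j) x =
      (-Real.sin (θ x) * pd i θ x) * pd j ψ x
      + Real.cos (θ x) * fderiv ℝ (fderiv ℝ ψ) x (Pi.single i 1) (Pi.single j 1)
      + (Real.cos (θ x) * pd i θ x) * pd j ℓ x
      + Real.sin (θ x) * fderiv ℝ (fderiv ℝ ℓ) x (Pi.single i 1) (Pi.single j 1) := by
    intro i j
    have heq : (fun y => w y j) =ᶠ[nhds x]
        fun y => Real.cos (θ y) * pd j ψ y + Real.sin (θ y) * pd j ℓ y := by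
      filter_upwards [hmem] with y hy
      rw [(hrep y hy).1]
      simp [grad3, smul_eq_mul]
    have hre : pd i (fun y => w y j) x =
        pd i (fun y => Real.cos (θ y) * pd j ψ y + Real.sin (θ y) * pd j ℓ y) x :=
      congrArg (fun D : R3 →L[ℝ] ℝ => D (Pi.single i 1)) heq.fderiv_eq
    rw [hre, pd_expand hℓx hψx hθx i j]
  have hPsym : ∀ i j : Fin 3, fderiv ℝ (fderiv ℝ ψ) x (Pi.single i 1) (Pi.single j 1)
      = fderiv ℝ (fderiv ℝ ψ) x (Pi.single j 1) (Pi.single i 1) := fun i j =>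
    (hψx.isSymmSndFDerivAt (by rw [minSmoothness_of_isRCLikeNormedField]; exact WithTop.coe_le_coe.mpr (le_top : (2:ℕ∞) ≤ ⊤))) _ _
  have hLsym : ∀ i j : Fin 3, fderiv ℝ (fderiv ℝ ℓ) x (Pi.single i 1) (Pi.single j 1)
      = fderiv ℝ (fderiv ℝ ℓ) x (Pi.single j 1) (Pi.single i 1) := fun i j =>
    (hℓx.isSymmSndFDerivAt (by rw [minSmoothness_of_isRCLikeNormedField]; exact WithTop.coe_le_coe.mpr (le_top : (2:ℕ∞) ≤ ⊤))) _ _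
  obtain ⟨hw0, h2, h3⟩ := hrep x hxU
  have hwx : ∀ j : Fin 3, w x j = Real.cos (θ x) * pd j ψ x + Real.sin (θ x) * pd j ℓ x := by
    intro j; rw [hw0]; simp [grad3, smul_eq_mul]
  simp only [dot3, grad3] at h2 h3
  funext k
  fin_cases k
  · show w x 1 * (pd 0 (fun y => w y 1) x - pd 1 (fun y => w y 0) x)
        - w x 2 * (pd 2 (fun y => w y 0) x - pd 0 (fun y => w y 2) x) = 0
    rw [hpdw 0 1, hpdw 1 0, hpdw 2 0, hpdw 0 2, hwx 1, hwx 2]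
    linear_combination (-(pd 0 θ x)) * h2 + (Real.sin (θ x) * pd 0 ψ x - Real.cos (θ x) * pd 0 ℓ x) * h3
      + (Real.cos (θ x) * pd 1 ψ x + Real.sin (θ x) * pd 1 ℓ x) *
        (Real.cos (θ x) * hPsym 0 1 + Real.sin (θ x) * hLsym 0 1)
      - (Real.cos (θ x) * pd 2 ψ x + Real.sin (θ x) * pd 2 ℓ x) *
        (Real.cos (θ x) * hPsym 2 0 + Real.sin (θ x) * hLsym 2 0)
  · show w x 2 * (pd 1 (fun y => w y 2) x - pd 2 (fun y => w y 1) x)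
        - w x 0 * (pd 0 (fun y => w y 1) x - pd 1 (fun y => w y 0) x) = 0
    rw [hpdw 1 2, hpdw 2 1, hpdw 0 1, hpdw 1 0, hwx 2, hwx 0]
    linear_combination (-(pd 1 θ x)) * h2 + (Real.sin (θ x) * pd 1 ψ x - Real.cos (θ x) * pd 1 ℓ x) * h3
      + (Real.cos (θ x) * pd 2 ψ x + Real.sin (θ x) * pd 2 ℓ x) *
        (Real.cos (θ x) * hPsym 1 2 + Real.sin (θ x) * hLsym 1 2)
      - (Real.cos (θ x) * pd 0 ψ x + Real.sin (θ x) * pd 0 ℓ x) *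
        (Real.cos (θ x) * hPsym 0 1 + Real.sin (θ x) * hLsym 0 1)
  · show w x 0 * (pd 2 (fun y => w y 0) x - pd 0 (fun y => w y 2) x)
        - w x 1 * (pd 1 (fun y => w y 2) x - pd 2 (fun y => w y 1) x) = 0
    rw [hpdw 2 0, hpdw 0 2, hpdw 1 2, hpdw 2 1, hwx 0, hwx 1]
    linear_combination (-(pd 2 θ x)) * h2 + (Real.sin (θ x) * pd 2 ψ x - Real.cos (θ x) * pd 2 ℓ x) * h3
      + (Real.cos (θ x) * pd 0 ψ x + Real.sin (θ x) * pd 0 ℓ x) *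
        (Real.cos (θ x) * hPsym 2 0 + Real.sin (θ x) * hLsym 2 0)
      - (Real.cos (θ x) * pd 1 ψ x + Real.sin (θ x) * pd 1 ℓ x) *
        (Real.cos (θ x) * hPsym 1 2 + Real.sin (θ x) * hLsym 1 2)
end
end

section
/- Let Ω ⊆ ℝ³ be a bounded open set and let ℓ, ψ, θ : Ω → ℝ be twice continuously differentiable functions forming an orthogonal coordinate system on Ω, i.e. ∇ℓ · ∇ψ = ∇ℓ · ∇θ = ∇ψ · ∇θ = 0 and the Jacobian h = ∇ℓ · (∇ψ × ∇θ) is nonvanishing on Ω. Assume |∇ℓ| = |∇ψ| on Ω and |∇θ| = |α| on Ω for a continuous function α : Ω → ℝ. Then the vector field w = cos θ ∇ψ + sin θ ∇ℓ satisfies curl w = σ|α| w on Ω, where σ(x) = h(x)/|h(x)| is the sign of the Jacobian; in particular w is a Beltrami field in Ω. -/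
noncomputable section

/-! ### Auxiliary calculus lemmas -/

lemma pd_congr_nhds {f g : R3 → ℝ} {x : R3} (h : f =ᶠ[nhds x] g) (i : Fin 3) :
    pd i f x = pd i g x := by
  unfold pd; rw [h.fderiv_eq]

lemma hasFDerivAt_pd {g : R3 → ℝ} {x : R3} (hg : ContDiffAt ℝ 2 g x) (i : Fin 3) :
    HasFDerivAt (fun y => pd i g y)
      ((fderiv ℝ (fderiv ℝ g) x).flip (Pi.single i 1)) x := by
  have hg' : DifferentiableAt ℝ (fderiv ℝ g) x :=
    (hg.fderiv_right (m := 1) (by norm_num)).differentiableAt one_ne_zero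
  have h := hg'.hasFDerivAt.clm_apply (hasFDerivAt_const (Pi.single i 1 : R3) x)
  simpa [pd, ContinuousLinearMap.comp_zero] using h

lemma pd_term {f g : R3 → ℝ} {x : R3} (hf : ContDiffAt ℝ 2 f x) (hg : ContDiffAt ℝ 2 g x)
    {F : ℝ → ℝ} {F' : ℝ} (hF : HasDerivAt F F' (f x)) (i j : Fin 3) :
    pd j (fun y => F (f y) * pd i g y) x =
      (F' * pd j f x) * pd i g x +
        F (f x) * fderiv ℝ (fderiv ℝ g) x (Pi.single j 1) (Pi.single i 1) := by
  have h1 : HasFDerivAt (fun y => F (f y)) (F' • fderiv ℝ f x) x :=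
    hF.comp_hasFDerivAt x (hf.differentiableAt two_ne_zero).hasFDerivAt
  have h3 := h1.mul (hasFDerivAt_pd hg i)
  have h4 := h3.fderiv
  show (fderiv ℝ (fun y => F (f y) * pd i g y) x) (Pi.single j 1) = _
  rw [show (fun y => F (f y) * pd i g y) = ((fun y => F (f y)) * fun y => pd i g y) from rfl, h4]
  simp [pd, ContinuousLinearMap.flip_apply, mul_comm]
  ring

lemma pd_w {ℓ ψ θ : R3 → ℝ} {x : R3} (hℓ : ContDiffAt ℝ 2 ℓ x) (hψ : ContDiffAt ℝ 2 ψ x)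
    (hθ : ContDiffAt ℝ 2 θ x) (i j : Fin 3) :
    pd j (fun y => Real.cos (θ y) * pd i ψ y + Real.sin (θ y) * pd i ℓ y) x =
      ((-Real.sin (θ x) * pd j θ x) * pd i ψ x
        + Real.cos (θ x) * fderiv ℝ (fderiv ℝ ψ) x (Pi.single j 1) (Pi.single i 1))
      + ((Real.cos (θ x) * pd j θ x) * pd i ℓ x
        + Real.sin (θ x) * fderiv ℝ (fderiv ℝ ℓ) x (Pi.single j 1) (Pi.single i 1)) := by
  have hθd := (hθ.differentiableAt two_ne_zero).hasFDerivAt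
  have dA : DifferentiableAt ℝ (fun y => Real.cos (θ y) * pd i ψ y) x :=
    (((Real.hasDerivAt_cos (θ x)).comp_hasFDerivAt x hθd).mul
      (hasFDerivAt_pd hψ i)).differentiableAt
  have dB : DifferentiableAt ℝ (fun y => Real.sin (θ y) * pd i ℓ y) x :=
    (((Real.hasDerivAt_sin (θ x)).comp_hasFDerivAt x hθd).mul
      (hasFDerivAt_pd hℓ i)).differentiableAt
  have hsplit : pd j (fun y => Real.cos (θ y) * pd i ψ y + Real.sin (θ y) * pd i ℓ y) x
      = pd j (fun y => Real.cos (θ y) * pd i ψ y) x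
        + pd j (fun y => Real.sin (θ y) * pd i ℓ y) x := by
    show (fderiv ℝ (fun y => Real.cos (θ y) * pd i ψ y + Real.sin (θ y) * pd i ℓ y) x)
        (Pi.single j 1) = _
    rw [fderiv_fun_add dA dB]
    rfl
  rw [hsplit, pd_term hθ hψ (Real.hasDerivAt_cos (θ x)) i j,
    pd_term hθ hℓ (Real.hasDerivAt_sin (θ x)) i j]

/-! ### Auxiliary algebra lemmas -/

lemma id1 (u v t : R3) (hvu : dot3 u v = 0) (hvt : dot3 v t = 0) (i : Fin 3) :
    dot3 v v * cross3 t u i = dot3 u (cross3 v t) * v i := by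
  simp only [dot3, cross3] at hvu hvt
  fin_cases i
  · show (v 0 * v 0 + v 1 * v 1 + v 2 * v 2) * (t 1 * u 2 - t 2 * u 1)
      = (u 0 * (v 1 * t 2 - v 2 * t 1) + u 1 * (v 2 * t 0 - v 0 * t 2)
          + u 2 * (v 0 * t 1 - v 1 * t 0)) * v 0
    linear_combination (-(v 1 * t 2 - v 2 * t 1)) * hvu + (v 1 * u 2 - v 2 * u 1) * hvt
  · show (v 0 * v 0 + v 1 * v 1 + v 2 * v 2) * (t 2 * u 0 - t 0 * u 2)
      = (u 0 * (v 1 * t 2 - v 2 * t 1) + u 1 * (v 2 * t 0 - v 0 * t 2)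
          + u 2 * (v 0 * t 1 - v 1 * t 0)) * v 1
    linear_combination (-(v 2 * t 0 - v 0 * t 2)) * hvu + (v 2 * u 0 - v 0 * u 2) * hvt
  · show (v 0 * v 0 + v 1 * v 1 + v 2 * v 2) * (t 0 * u 1 - t 1 * u 0)
      = (u 0 * (v 1 * t 2 - v 2 * t 1) + u 1 * (v 2 * t 0 - v 0 * t 2)
          + u 2 * (v 0 * t 1 - v 1 * t 0)) * v 2
    linear_combination (-(v 0 * t 1 - v 1 * t 0)) * hvu + (v 0 * u 1 - v 1 * u 0) * hvt

lemma id2 (u v t : R3) (huv : dot3 u v = 0) (hut : dot3 u t = 0) (i : Fin 3) :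
    dot3 u u * cross3 v t i = dot3 u (cross3 v t) * u i := by
  simp only [dot3, cross3] at huv hut
  fin_cases i
  · show (u 0 * u 0 + u 1 * u 1 + u 2 * u 2) * (v 1 * t 2 - v 2 * t 1)
      = (u 0 * (v 1 * t 2 - v 2 * t 1) + u 1 * (v 2 * t 0 - v 0 * t 2)
          + u 2 * (v 0 * t 1 - v 1 * t 0)) * u 0
    linear_combination (-(u 1 * v 2 - u 2 * v 1)) * hut + (u 1 * t 2 - u 2 * t 1) * huv
  · show (u 0 * u 0 + u 1 * u 1 + u 2 * u 2) * (v 2 * t 0 - v 0 * t 2)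
      = (u 0 * (v 1 * t 2 - v 2 * t 1) + u 1 * (v 2 * t 0 - v 0 * t 2)
          + u 2 * (v 0 * t 1 - v 1 * t 0)) * u 1
    linear_combination (-(u 2 * v 0 - u 0 * v 2)) * hut + (u 2 * t 0 - u 0 * t 2) * huv
  · show (u 0 * u 0 + u 1 * u 1 + u 2 * u 2) * (v 0 * t 1 - v 1 * t 0)
      = (u 0 * (v 1 * t 2 - v 2 * t 1) + u 1 * (v 2 * t 0 - v 0 * t 2)
          + u 2 * (v 0 * t 1 - v 1 * t 0)) * u 2
    linear_combination (-(u 0 * v 1 - u 1 * v 0)) * hut + (u 0 * t 1 - u 1 * t 0) * huv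

lemma dot3_nonneg (u : R3) : 0 ≤ dot3 u u := by
  unfold dot3; nlinarith [mul_self_nonneg (u 0), mul_self_nonneg (u 1), mul_self_nonneg (u 2)]

lemma cross3_anti (u v : R3) (i : Fin 3) : cross3 u v i = -(cross3 v u i) := by
  fin_cases i
  · show u 1 * v 2 - u 2 * v 1 = -(v 1 * u 2 - v 2 * u 1); ring
  · show u 2 * v 0 - u 0 * v 2 = -(v 2 * u 0 - v 0 * u 2); ring
  · show u 0 * v 1 - u 1 * v 0 = -(v 0 * u 1 - v 1 * u 0); ring

lemma beltrami_algebra (u v t : R3) (a c s : ℝ)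
    (h1 : dot3 u v = 0) (h2 : dot3 u t = 0) (h3 : dot3 v t = 0)
    (hj : dot3 u (cross3 v t) ≠ 0)
    (hn : Real.sqrt (dot3 u u) = Real.sqrt (dot3 v v))
    (he : Real.sqrt (dot3 t t) = |a|) (i : Fin 3) :
    -s * cross3 t v i + c * cross3 t u i =
      ((dot3 u (cross3 v t) / |dot3 u (cross3 v t)|) * |a|) * (c * v i + s * u i) := by
  have hd : dot3 u u = dot3 v v := by
    rw [← Real.sq_sqrt (dot3_nonneg u), ← Real.sq_sqrt (dot3_nonneg v), hn]
  have ht : dot3 t t = a ^ 2 := by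
    rw [← Real.sq_sqrt (dot3_nonneg t), he, sq_abs]
  have key : dot3 u u * dot3 (cross3 v t) (cross3 v t)
      = dot3 u (cross3 v t) * dot3 u (cross3 v t) := by
    have e0 := id2 u v t h1 h2 0
    have e1 := id2 u v t h1 h2 1
    have e2 := id2 u v t h1 h2 2
    simp only [dot3] at e0 e1 e2 ⊢
    linear_combination (cross3 v t 0) * e0 + (cross3 v t 1) * e1 + (cross3 v t 2) * e2
  have lag : dot3 (cross3 v t) (cross3 v t) = dot3 v v * dot3 t t - dot3 v t * dot3 v t := by
    show (v 1 * t 2 - v 2 * t 1) * (v 1 * t 2 - v 2 * t 1)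
        + (v 2 * t 0 - v 0 * t 2) * (v 2 * t 0 - v 0 * t 2)
        + (v 0 * t 1 - v 1 * t 0) * (v 0 * t 1 - v 1 * t 0) = _
    simp only [dot3]
    ring
  have gram : dot3 u (cross3 v t) ^ 2 = (dot3 u u * |a|) ^ 2 := by
    rw [pow_two, ← key, lag, ← hd, ht, h3, mul_pow, sq_abs]; ring
  have hd0 : 0 < dot3 u u := by
    rcases (dot3_nonneg u).lt_or_eq with h | h
    · exact h
    · exfalso; apply hj
      have : dot3 u (cross3 v t) ^ 2 = 0 := by rw [gram, ← h]; ring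
      exact (pow_eq_zero_iff two_ne_zero).mp this
  have ha0 : a ≠ 0 := by
    intro h; apply hj
    have : dot3 u (cross3 v t) ^ 2 = 0 := by rw [gram, h]; simp
    exact (pow_eq_zero_iff two_ne_zero).mp this
  have habs : |dot3 u (cross3 v t)| = dot3 u u * |a| := by
    calc |dot3 u (cross3 v t)| = Real.sqrt (dot3 u (cross3 v t) ^ 2) :=
          (Real.sqrt_sq_eq_abs _).symm
      _ = Real.sqrt ((dot3 u u * |a|) ^ 2) := by rw [gram]
      _ = abs (dot3 u u * |a|) := Real.sqrt_sq_eq_abs _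
      _ = dot3 u u * |a| := abs_of_nonneg (by positivity)
  have hd' : dot3 u u ≠ 0 := ne_of_gt hd0
  have ha' : |a| ≠ 0 := abs_ne_zero.mpr ha0
  have hq : (dot3 u (cross3 v t) / |dot3 u (cross3 v t)|) * |a|
      = dot3 u (cross3 v t) / dot3 u u := by
    rw [habs]; field_simp
  rw [hq]
  have e7 : dot3 u u * cross3 t u i = dot3 u (cross3 v t) * v i := by
    rw [hd]; exact id1 u v t h1 h3 i
  have e8 := id2 u v t h1 h2 i
  have hmain : dot3 u u * (-s * cross3 t v i + c * cross3 t u i)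
      = dot3 u u * (dot3 u (cross3 v t) / dot3 u u * (c * v i + s * u i)) := by
    rw [cross3_anti t v i]
    have hr : dot3 u u * (dot3 u (cross3 v t) / dot3 u u * (c * v i + s * u i))
        = dot3 u (cross3 v t) * (c * v i + s * u i) := by field_simp
    rw [hr]
    linear_combination s * e8 + c * e7
  exact mul_left_cancel₀ hd' hmain

/-- Construction of Beltrami fields from an orthogonal coordinate system:
the field `w = cos θ ∇ψ + sin θ ∇ℓ`. -/
theorem beltrami_construction
    (Ω : Set R3) (hΩopen : IsOpen Ω) (hΩbdd : Bornology.IsBounded Ω)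
    (ℓ ψ θ α : R3 → ℝ)
    (hℓ : ContDiffOn ℝ 2 ℓ Ω) (hψ : ContDiffOn ℝ 2 ψ Ω) (hθ : ContDiffOn ℝ 2 θ Ω)
    (hα : ContinuousOn α Ω)
    (horth1 : ∀ x ∈ Ω, dot3 (grad3 ℓ x) (grad3 ψ x) = 0)
    (horth2 : ∀ x ∈ Ω, dot3 (grad3 ℓ x) (grad3 θ x) = 0)
    (horth3 : ∀ x ∈ Ω, dot3 (grad3 ψ x) (grad3 θ x) = 0)
    (hjac : ∀ x ∈ Ω, dot3 (grad3 ℓ x) (cross3 (grad3 ψ x) (grad3 θ x)) ≠ 0)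
    (hnorm : ∀ x ∈ Ω, norm3 (grad3 ℓ x) = norm3 (grad3 ψ x))
    (heik : ∀ x ∈ Ω, norm3 (grad3 θ x) = |α x|)
    (w : R3 → R3)
    (hw : ∀ x ∈ Ω, w x = Real.cos (θ x) • grad3 ψ x + Real.sin (θ x) • grad3 ℓ x) :
    ∀ x ∈ Ω,
      curl3 w x =
        ((dot3 (grad3 ℓ x) (cross3 (grad3 ψ x) (grad3 θ x)) /
            |dot3 (grad3 ℓ x) (cross3 (grad3 ψ x) (grad3 θ x))|) * |α x|) • w x := by
  intro x hx
  have hmem : Ω ∈ nhds x := hΩopen.mem_nhds hx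
  have hℓx : ContDiffAt ℝ 2 ℓ x := hℓ.contDiffAt hmem
  have hψx : ContDiffAt ℝ 2 ψ x := hψ.contDiffAt hmem
  have hθx : ContDiffAt ℝ 2 θ x := hθ.contDiffAt hmem
  have hweq : ∀ i : Fin 3, (fun y => w y i) =ᶠ[nhds x]
      (fun y => Real.cos (θ y) * pd i ψ y + Real.sin (θ y) * pd i ℓ y) := by
    intro i
    filter_upwards [hmem] with y hy
    rw [hw y hy]
    rfl
  have E : ∀ i j : Fin 3, pd j (fun y => w y i) x =
      ((-Real.sin (θ x) * pd j θ x) * pd i ψ x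
        + Real.cos (θ x) * fderiv ℝ (fderiv ℝ ψ) x (Pi.single j 1) (Pi.single i 1))
      + ((Real.cos (θ x) * pd j θ x) * pd i ℓ x
        + Real.sin (θ x) * fderiv ℝ (fderiv ℝ ℓ) x (Pi.single j 1) (Pi.single i 1)) :=
    fun i j => (pd_congr_nhds (hweq i) j).trans (pd_w hℓx hψx hθx i j)
  have symψ : IsSymmSndFDerivAt ℝ ψ x := hψx.isSymmSndFDerivAt (by simp)
  have symℓ : IsSymmSndFDerivAt ℝ ℓ x := hℓx.isSymmSndFDerivAt (by simp)
  have halg := beltrami_algebra (grad3 ℓ x) (grad3 ψ x) (grad3 θ x) (α x)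
    (Real.cos (θ x)) (Real.sin (θ x)) (horth1 x hx) (horth2 x hx) (horth3 x hx)
    (hjac x hx) (hnorm x hx) (heik x hx)
  set q := (dot3 (grad3 ℓ x) (cross3 (grad3 ψ x) (grad3 θ x)) /
      |dot3 (grad3 ℓ x) (cross3 (grad3 ψ x) (grad3 θ x))|) * |α x| with hqdef
  have hw0 : ∀ i : Fin 3, w x i = Real.cos (θ x) * pd i ψ x + Real.sin (θ x) * pd i ℓ x := by
    intro i; rw [hw x hx]; rfl
  have comp0 : pd 1 (fun y => w y 2) x - pd 2 (fun y => w y 1) x = q * w x 0 := by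
    have key : -Real.sin (θ x) * (pd 1 θ x * pd 2 ψ x - pd 2 θ x * pd 1 ψ x)
        + Real.cos (θ x) * (pd 1 θ x * pd 2 ℓ x - pd 2 θ x * pd 1 ℓ x)
        = q * (Real.cos (θ x) * pd 0 ψ x + Real.sin (θ x) * pd 0 ℓ x) := halg 0
    have s1 := symψ (Pi.single 1 1) (Pi.single 2 1)
    have s2 := symℓ (Pi.single 1 1) (Pi.single 2 1)
    rw [E 2 1, E 1 2, hw0 0]
    linear_combination key + Real.cos (θ x) * s1 + Real.sin (θ x) * s2
  have comp1 : pd 2 (fun y => w y 0) x - pd 0 (fun y => w y 2) x = q * w x 1 := by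
    have key : -Real.sin (θ x) * (pd 2 θ x * pd 0 ψ x - pd 0 θ x * pd 2 ψ x)
        + Real.cos (θ x) * (pd 2 θ x * pd 0 ℓ x - pd 0 θ x * pd 2 ℓ x)
        = q * (Real.cos (θ x) * pd 1 ψ x + Real.sin (θ x) * pd 1 ℓ x) := halg 1
    have s1 := symψ (Pi.single 2 1) (Pi.single 0 1)
    have s2 := symℓ (Pi.single 2 1) (Pi.single 0 1)
    rw [E 0 2, E 2 0, hw0 1]
    linear_combination key + Real.cos (θ x) * s1 + Real.sin (θ x) * s2
  have comp2 : pd 0 (fun y => w y 1) x - pd 1 (fun y => w y 0) x = q * w x 2 := by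
    have key : -Real.sin (θ x) * (pd 0 θ x * pd 1 ψ x - pd 1 θ x * pd 0 ψ x)
        + Real.cos (θ x) * (pd 0 θ x * pd 1 ℓ x - pd 1 θ x * pd 0 ℓ x)
        = q * (Real.cos (θ x) * pd 2 ψ x + Real.sin (θ x) * pd 2 ℓ x) := halg 2
    have s1 := symψ (Pi.single 0 1) (Pi.single 1 1)
    have s2 := symℓ (Pi.single 0 1) (Pi.single 1 1)
    rw [E 1 0, E 0 1, hw0 2]
    linear_combination key + Real.cos (θ x) * s1 + Real.sin (θ x) * s2
  funext i
  fin_cases i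
  · exact comp0
  · exact comp1
  · exact comp2
end
end

section
/- Define the vector field w : ℝ³ → ℝ³ by w(x, y, z) = ( (1/√2) cos(e^{x+y}/√2), −(1/√2) cos(e^{x+y}/√2), sin(e^{x+y}/√2) ), i.e. w = (1/√2) cos(e^{x+y}/√2) ∇(x − y) + sin(e^{x+y}/√2) ∇z. Then curl w = e^{x+y} w on ℝ³ (so w is a Beltrami field with inhomogeneous proportionality factor e^{x+y}) and div w = 0 on ℝ³. -/
noncomputable section

def Lsum : R3 →L[ℝ] ℝ :=
  (ContinuousLinearMap.proj (R := ℝ) (φ := fun _ : Fin 3 => ℝ) 0) +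
  (ContinuousLinearMap.proj (R := ℝ) (φ := fun _ : Fin 3 => ℝ) 1)

lemma pd_comp (f : ℝ → ℝ) (x : R3) (hf : DifferentiableAt ℝ f (x 0 + x 1)) (i : Fin 3) :
    pd i (fun p => f (p 0 + p 1)) x
      = ((Pi.single i (1:ℝ) : R3) 0 + (Pi.single i (1:ℝ) : R3) 1) * deriv f (x 0 + x 1) := by
  have hL : HasFDerivAt (fun p : R3 => p 0 + p 1) Lsum x := by
    have h0 := (ContinuousLinearMap.proj (R := ℝ) (φ := fun _ : Fin 3 => ℝ) 0).hasFDerivAt (x := x)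
    have h1 := (ContinuousLinearMap.proj (R := ℝ) (φ := fun _ : Fin 3 => ℝ) 1).hasFDerivAt (x := x)
    exact h0.add h1
  have h := hf.hasDerivAt.hasFDerivAt.comp x hL
  have h' : HasFDerivAt (fun p : R3 => f (p 0 + p 1))
      ((ContinuousLinearMap.smulRight 1 (deriv f (x 0 + x 1))).comp Lsum) x := h
  unfold pd
  rw [h'.fderiv]
  simp [Lsum]
  ring

/-- A solenoidal Beltrami field with inhomogeneous proportionality factor `e^{x+y}`. -/
theorem exponential_beltrami_field
    (w : R3 → R3)
    (hw : w = fun p =>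
      ![(1 / Real.sqrt 2) * Real.cos (Real.exp (p 0 + p 1) / Real.sqrt 2),
        -(1 / Real.sqrt 2) * Real.cos (Real.exp (p 0 + p 1) / Real.sqrt 2),
        Real.sin (Real.exp (p 0 + p 1) / Real.sqrt 2)]) :
    ∀ p : R3,
      curl3 w p = Real.exp (p 0 + p 1) • w p ∧ div3 w p = 0 := by
  intro p
  have hc : Real.sqrt 2 ≠ 0 := by positivity
  have hcc : Real.sqrt 2 * Real.sqrt 2 = 2 := Real.mul_self_sqrt (by norm_num)
  have hg : ∀ u : ℝ, HasDerivAt (fun v => Real.exp v / Real.sqrt 2) (Real.exp u / Real.sqrt 2) u :=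
    fun u => (Real.hasDerivAt_exp u).div_const _
  have hd0 : ∀ u : ℝ, HasDerivAt (fun u => (1 / Real.sqrt 2) * Real.cos (Real.exp u / Real.sqrt 2))
      (1 / Real.sqrt 2 * (-Real.sin (Real.exp u / Real.sqrt 2) * (Real.exp u / Real.sqrt 2))) u :=
    fun u => ((Real.hasDerivAt_cos (Real.exp u / Real.sqrt 2)).comp u (hg u)).const_mul (1 / Real.sqrt 2)
  have hd1 : ∀ u : ℝ, HasDerivAt (fun u => -(1 / Real.sqrt 2) * Real.cos (Real.exp u / Real.sqrt 2))
      (-(1 / Real.sqrt 2) * (-Real.sin (Real.exp u / Real.sqrt 2) * (Real.exp u / Real.sqrt 2))) u :=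
    fun u => ((Real.hasDerivAt_cos (Real.exp u / Real.sqrt 2)).comp u (hg u)).const_mul (-(1 / Real.sqrt 2))
  have hd2 : ∀ u : ℝ, HasDerivAt (fun u => Real.sin (Real.exp u / Real.sqrt 2))
      (Real.cos (Real.exp u / Real.sqrt 2) * (Real.exp u / Real.sqrt 2)) u :=
    fun u => by have := (Real.hasDerivAt_sin (Real.exp u / Real.sqrt 2)).comp u (hg u); exact this
  have c0 : (fun y : R3 => w y 0)
      = fun y => (fun u => (1 / Real.sqrt 2) * Real.cos (Real.exp u / Real.sqrt 2)) (y 0 + y 1) := by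
    funext y; rw [hw]; rfl
  have c1 : (fun y : R3 => w y 1)
      = fun y => (fun u => -(1 / Real.sqrt 2) * Real.cos (Real.exp u / Real.sqrt 2)) (y 0 + y 1) := by
    funext y; rw [hw]; rfl
  have c2 : (fun y : R3 => w y 2)
      = fun y => (fun u => Real.sin (Real.exp u / Real.sqrt 2)) (y 0 + y 1) := by
    funext y; rw [hw]; rfl
  have hq0 : ∀ i, pd i (fun y => w y 0) p
      = ((Pi.single i (1:ℝ) : R3) 0 + (Pi.single i (1:ℝ) : R3) 1)
        * (1 / Real.sqrt 2 * (-Real.sin (Real.exp (p 0 + p 1) / Real.sqrt 2) * (Real.exp (p 0 + p 1) / Real.sqrt 2))) := by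
    intro i
    rw [c0, pd_comp _ _ (hd0 _).differentiableAt, (hd0 _).deriv]
  have hq1 : ∀ i, pd i (fun y => w y 1) p
      = ((Pi.single i (1:ℝ) : R3) 0 + (Pi.single i (1:ℝ) : R3) 1)
        * (-(1 / Real.sqrt 2) * (-Real.sin (Real.exp (p 0 + p 1) / Real.sqrt 2) * (Real.exp (p 0 + p 1) / Real.sqrt 2))) := by
    intro i
    rw [c1, pd_comp _ _ (hd1 _).differentiableAt, (hd1 _).deriv]
  have hq2 : ∀ i, pd i (fun y => w y 2) p
      = ((Pi.single i (1:ℝ) : R3) 0 + (Pi.single i (1:ℝ) : R3) 1)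
        * (Real.cos (Real.exp (p 0 + p 1) / Real.sqrt 2) * (Real.exp (p 0 + p 1) / Real.sqrt 2)) := by
    intro i
    rw [c2, pd_comp _ _ (hd2 _).differentiableAt, (hd2 _).deriv]
  constructor
  · funext i
    fin_cases i
    · show pd 1 (fun y => w y 2) p - pd 2 (fun y => w y 1) p = _
      rw [hq2, hq1, hw]
      simp [Pi.single_apply]
      ring
    · show pd 2 (fun y => w y 0) p - pd 0 (fun y => w y 2) p = _
      rw [hq0, hq2, hw]
      simp [Pi.single_apply]
      ring
    · show pd 0 (fun y => w y 1) p - pd 1 (fun y => w y 0) p = _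
      rw [hq0, hq1, hw]
      simp [Pi.single_apply]
      rw [div_eq_mul_inv]
      have h2 : ((Real.sqrt 2 : ℝ))⁻¹ * (Real.sqrt 2)⁻¹ = 1 / 2 := by
        rw [← mul_inv, hcc]; norm_num
      linear_combination (2 * Real.exp (p 0 + p 1) * Real.sin (Real.exp (p 0 + p 1) * (Real.sqrt 2)⁻¹)) * h2
  · show pd 0 (fun y => w y 0) p + pd 1 (fun y => w y 1) p + pd 2 (fun y => w y 2) p = 0
    rw [hq0, hq1, hq2]
    simp [Pi.single_apply]
end
end
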